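/- Let U and V be finite nonempty subsets of a commutative group. For d ∈ V−U define V_d = V ∩ (d+U). Then the set P of d ∈ V−U with |V_d| ≥ |U||V|/(2|U+V|) is nonempty. -/

import Mathlib

open Finset Pointwise Combinatorics.Additive

private lemma fiber_card_eq {G : Type*} [AddCommGroup G] [DecidableEq G]
    (U V : Finset G) (d : G) :
    (((-U) ×ˢ V).filter fun p ↦ p.1 + p.2 = d).card = (V ∩ ({d} + U)).card := by
  apply Finset.card_nbij' (fun p ↦ p.2) (fun v ↦ (d - v, v))
  · rintro ⟨a, b⟩ hp
    rw [Finset.mem_coe, Finset.mem_filter, Finset.mem_product, Finset.mem_neg'] at hp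
    obtain ⟨⟨ha, hb⟩, hab⟩ := hp
    rw [Finset.mem_coe, Finset.mem_inter]
    refine ⟨hb, Finset.mem_add.2 ⟨d, Finset.mem_singleton_self d, -a, ha, ?_⟩⟩
    rw [← hab]; abel
  · intro v hv
    rw [Finset.mem_coe, Finset.mem_inter] at hv
    obtain ⟨hv, hv2⟩ := hv
    rw [Finset.mem_coe, Finset.mem_filter, Finset.mem_product, Finset.mem_neg']
    refine ⟨⟨?_, hv⟩, sub_add_cancel d v⟩
    obtain ⟨x, hx, u, hu, hxu⟩ := Finset.mem_add.1 hv2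
    rw [Finset.mem_singleton] at hx
    have h : -(d - v) = u := by rw [← hxu, hx]; abel
    rw [h]; exact hu
  · rintro ⟨a, b⟩ hp
    simp only [Finset.mem_coe, Finset.mem_filter] at hp
    have : d - b = a := by rw [← hp.2]; abel
    simp [this]
  · intro v _; rfl

private lemma energy_neg_left {G : Type*} [AddCommGroup G] [DecidableEq G]
    (U V : Finset G) : E[-U, V] = E[U, V] := by
  unfold Finset.addEnergy
  apply Finset.card_nbij' (fun x ↦ ((-x.1.2, -x.1.1), x.2))
    (fun x ↦ ((-x.1.2, -x.1.1), x.2))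
  · rintro ⟨⟨a₁, a₂⟩, b₁, b₂⟩ hx
    simp only [Finset.mem_coe, Finset.mem_filter, Finset.mem_product, Finset.mem_neg', neg_neg] at hx ⊢
    obtain ⟨⟨⟨h1, h2⟩, h3, h4⟩, he⟩ := hx
    refine ⟨⟨⟨h2, h1⟩, h3, h4⟩, ?_⟩
    rw [neg_add_eq_sub, neg_add_eq_sub, sub_eq_sub_iff_add_eq_add,
      add_comm b₁ a₁, add_comm b₂ a₂]
    exact he
  · rintro ⟨⟨a₁, a₂⟩, b₁, b₂⟩ hx
    simp only [Finset.mem_coe, Finset.mem_filter, Finset.mem_product, Finset.mem_neg', neg_neg] at hx ⊢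
    obtain ⟨⟨⟨h1, h2⟩, h3, h4⟩, he⟩ := hx
    refine ⟨⟨⟨h2, h1⟩, h3, h4⟩, ?_⟩
    rw [neg_add_eq_sub, neg_add_eq_sub, sub_eq_sub_iff_add_eq_add,
      add_comm b₁ a₁, add_comm b₂ a₂]
    exact he
  · rintro ⟨⟨a₁, a₂⟩, b₁, b₂⟩ _; simp
  · rintro ⟨⟨a₁, a₂⟩, b₁, b₂⟩ _; simp

theorem popular_difference_exists {G : Type*} [AddCommGroup G] [DecidableEq G]
    (U V : Finset G) (hU : U.Nonempty) (hV : V.Nonempty) :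
    ∃ d ∈ V - U,
      ((V ∩ ({d} + U)).card : ℝ) ≥ (U.card : ℝ) * V.card / (2 * (U + V).card) := by
  have hVU : V - U = -U + V := by rw [sub_eq_add_neg, add_comm]
  have key : E[U, V] = ∑ d ∈ V - U, (V ∩ ({d} + U)).card ^ 2 := by
    rw [← energy_neg_left, Finset.addEnergy_eq_sum_sq', hVU]
    exact Finset.sum_congr rfl fun d _ ↦ by rw [fiber_card_eq]
  have sum_e : ∑ d ∈ V - U, (V ∩ ({d} + U)).card = U.card * V.card := by
    rw [hVU]
    have h := Finset.card_eq_sum_card_fiberwise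
      (s := (-U) ×ˢ V) (t := -U + V) (f := fun p ↦ p.1 + p.2)
      (fun p hp ↦ by
        rw [Finset.mem_coe, Finset.mem_product] at hp
        exact Finset.add_mem_add hp.1 hp.2)
    rw [Finset.card_product, Finset.card_neg] at h
    beta_reduce at h
    rw [h]
    exact Finset.sum_congr rfl fun d _ ↦ (fiber_card_eq U V d).symm
  have hne : (V - U).Nonempty := hV.sub hU
  obtain ⟨d₀, hd₀, hmax⟩ := Finset.exists_max_image (V - U)
    (fun d ↦ (V ∩ ({d} + U)).card) hne
  refine ⟨d₀, hd₀, ?_⟩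
  set M := (V ∩ ({d₀} + U)).card with hM
  have hnat : U.card ^ 2 * V.card ^ 2 ≤ (U + V).card * (M * (U.card * V.card)) := by
    calc U.card ^ 2 * V.card ^ 2 ≤ (U + V).card * E[U, V] :=
          Finset.le_card_add_mul_addEnergy U V
      _ ≤ (U + V).card * (M * (U.card * V.card)) := by
          rw [key]
          refine Nat.mul_le_mul_left _ ?_
          rw [← sum_e, Finset.mul_sum]
          exact Finset.sum_le_sum fun d hd ↦ by
            rw [sq]; exact Nat.mul_le_mul_right _ (hmax d hd)
  have hUV : 0 < U.card * V.card := Nat.mul_pos hU.card_pos hV.card_pos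
  have hnat2 : U.card * V.card ≤ (U + V).card * M := by
    have h2 : (U.card * V.card) * (U.card * V.card) ≤ ((U + V).card * M) * (U.card * V.card) := by
      calc (U.card * V.card) * (U.card * V.card) = U.card ^ 2 * V.card ^ 2 := by ring
        _ ≤ (U + V).card * (M * (U.card * V.card)) := hnat
        _ = ((U + V).card * M) * (U.card * V.card) := by ring
    exact Nat.le_of_mul_le_mul_right h2 hUV
  have hSpos : (0 : ℝ) < (U + V).card := by
    exact_mod_cast Nat.cast_pos.mpr (hU.add hV).card_pos
  rw [ge_iff_le, div_le_iff₀ (by positivity)]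
  have h2 : (U.card : ℝ) * V.card ≤ (U + V).card * M := by exact_mod_cast hnat2
  nlinarith [Nat.cast_nonneg (α := ℝ) M]
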